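/- For every c > 0, the function φ̄(r) = 2 arctan(r/c) satisfies, for all r > 0, the identity r φ̄'(r) − φ̄''(r) − φ̄'(r)/r + sin(2φ̄(r))/(2r²) = 2rc/(c² + r²); in particular this quantity is nonnegative for r ∈ [0,1], so the time-independent function (r,t) ↦ 2 arctan(r/c) is a supersolution of the drifted harmonic map heat equation φ_t + r φ_r = φ_rr + φ_r/r − sin(2φ)/(2r²) on (0,1) × (0,∞). -/

import Mathlib

open Set Real

noncomputable section

lemma d1' (c : ℝ) (hc : 0 < c) (r : ℝ) :
    deriv (fun s => 2 * arctan (s / c)) r = 2 * c / (c ^ 2 + r ^ 2) := by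
  have hc0 : c ≠ 0 := ne_of_gt hc
  have h1 : HasDerivAt (fun s : ℝ => s / c) (1 / c) r := by
    simpa using (hasDerivAt_id r).div_const c
  have h2 : HasDerivAt (fun s : ℝ => arctan (s / c)) (1 / (1 + (r / c) ^ 2) * (1 / c)) r :=
    by simpa [one_div] using h1.arctan
  have h3 := h2.const_mul (2 : ℝ)
  rw [h3.deriv]
  have hden : 1 + (r / c) ^ 2 ≠ 0 := by positivity
  have hden2 : c ^ 2 + r ^ 2 ≠ 0 := by positivity
  field_simp

lemma d2' (c : ℝ) (hc : 0 < c) (r : ℝ) :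
    deriv (deriv (fun s => 2 * arctan (s / c))) r
      = -(4 * c * r) / (c ^ 2 + r ^ 2) ^ 2 := by
  have : deriv (fun s => 2 * arctan (s / c)) = fun s => 2 * c / (c ^ 2 + s ^ 2) :=
    funext (d1' c hc)
  rw [this]
  have hden : c ^ 2 + r ^ 2 ≠ 0 := by positivity
  have h1 : HasDerivAt (fun s : ℝ => c ^ 2 + s ^ 2) (2 * r) r := by
    simpa using ((hasDerivAt_pow 2 r).const_add (c ^ 2))
  have h2 : HasDerivAt (fun s : ℝ => (c ^ 2 + s ^ 2)⁻¹)
      (-(2 * r) / (c ^ 2 + r ^ 2) ^ 2) r := h1.inv hden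
  have h3 := h2.const_mul (2 * c)
  have heq : (fun s : ℝ => 2 * c / (c ^ 2 + s ^ 2)) = fun s => 2 * c * (c ^ 2 + s ^ 2)⁻¹ := by
    funext s; rw [div_eq_mul_inv]
  rw [heq, h3.deriv]
  field_simp
  ring

lemma sin4 (c : ℝ) (hc : 0 < c) (r : ℝ) :
    Real.sin (2 * (2 * arctan (r / c)))
      = 4 * (r / c) * (1 - (r / c) ^ 2) / (1 + (r / c) ^ 2) ^ 2 := by
  set x := r / c
  have hs : Real.sqrt (1 + x ^ 2) ^ 2 = 1 + x ^ 2 :=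
    Real.sq_sqrt (by positivity)
  have hsne : Real.sqrt (1 + x ^ 2) ≠ 0 := by positivity
  rw [Real.sin_two_mul, Real.sin_two_mul, Real.cos_two_mul, Real.sin_arctan, Real.cos_arctan]
  have hden : (1 : ℝ) + x ^ 2 ≠ 0 := by positivity
  field_simp
  have h4 : Real.sqrt (1 + x ^ 2) ^ 4 = (1 + x ^ 2) ^ 2 := by
    rw [show (4:ℕ) = 2 * 2 from rfl, pow_mul, hs]
  simp only [h4, hs]
  ring

/-- Supersolution property of `r ↦ 2 arctan (r/c)` for the drifted harmonic map heat flow. -/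
theorem stmt_9 (c : ℝ) (hc : 0 < c) :
    (∀ r : ℝ, 0 < r →
      r * deriv (fun s => 2 * arctan (s / c)) r
        - deriv (deriv (fun s => 2 * arctan (s / c))) r
        - deriv (fun s => 2 * arctan (s / c)) r / r
        + Real.sin (2 * (2 * arctan (r / c))) / (2 * r ^ 2)
        = 2 * r * c / (c ^ 2 + r ^ 2)) ∧
    (∀ r ∈ Icc (0:ℝ) 1, 0 ≤ 2 * r * c / (c ^ 2 + r ^ 2)) ∧
    (∀ r ∈ Ioo (0:ℝ) 1, ∀ t : ℝ, 0 < t →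
      deriv (fun _ : ℝ => 2 * arctan (r / c)) t + r * deriv (fun s => 2 * arctan (s / c)) r
        ≥ deriv (deriv (fun s => 2 * arctan (s / c))) r
          + deriv (fun s => 2 * arctan (s / c)) r / r
          - Real.sin (2 * (2 * arctan (r / c))) / (2 * r ^ 2)) := by
  have key : ∀ r : ℝ, 0 < r →
      r * deriv (fun s => 2 * arctan (s / c)) r
        - deriv (deriv (fun s => 2 * arctan (s / c))) r
        - deriv (fun s => 2 * arctan (s / c)) r / r
        + Real.sin (2 * (2 * arctan (r / c))) / (2 * r ^ 2)
        = 2 * r * c / (c ^ 2 + r ^ 2) := by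
    intro r hr
    rw [d1' c hc, d2' c hc, sin4 c hc]
    have hr0 : r ≠ 0 := ne_of_gt hr
    have hc0 : c ≠ 0 := ne_of_gt hc
    have hden : c ^ 2 + r ^ 2 ≠ 0 := by positivity
    have hden2 : (1 : ℝ) + (r / c) ^ 2 ≠ 0 := by positivity
    field_simp
    ring
  refine ⟨key, ?_, ?_⟩
  · intro r hr
    have : (0:ℝ) < c ^ 2 + r ^ 2 := by positivity
    have h0 : 0 ≤ r := hr.1
    positivity
  · intro r hr t _
    have hkey := key r hr.1
    have hct : deriv (fun _ : ℝ => 2 * arctan (r / c)) t = 0 := deriv_const _ _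
    rw [hct]
    have hnn : 0 ≤ 2 * r * c / (c ^ 2 + r ^ 2) := by
      have : (0:ℝ) < c ^ 2 + r ^ 2 := by positivity
      have h0 : 0 ≤ r := le_of_lt hr.1
      positivity
    linarith

end
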